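/- arXiv:2102.02177 — 5 statements merged into one kernel-verified Lean document; each statement's English description precedes it below -/
import Mathlib

section
/- For every Wahl continued fraction [a_1,...,a_r] there exist coprime integers 0 < a < m such that [a_1,...,a_r] = m²/(ma-1). -/
/-- Hirzebruch–Jung continued fraction `[a_1,...,a_r] = a_1 - 1/[a_2,...,a_r]`
(with the junk value `1/0 = 0`, so `hj [a] = a`). -/
def hj : List ℤ → ℚ
  | [] => 0
  | a :: l => (a : ℚ) - 1 / hj l

/-- Wahl continued fractions: `[4]` is one, and if `[a_1,...,a_r]` is one, then
so are `[2, a_1,...,a_{r-1}, a_r+1]` and `[a_1+1, a_2,...,a_r, 2]`. -/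
inductive IsWahl : List ℤ → Prop
  | base : IsWahl [4]
  | left (l : List ℤ) (a : ℤ) : IsWahl (l ++ [a]) → IsWahl (2 :: (l ++ [a + 1]))
  | right (a : ℤ) (l : List ℤ) : IsWahl (a :: l) → IsWahl ((a + 1) :: (l ++ [2]))

/-- Transfer matrix of a HJ continued fraction, as a 4-tuple `(A,B,C,D)`
representing the product of matrices `[[a,-1],[1,0]]`. -/
def mA : List ℤ → ℤ × ℤ × ℤ × ℤ
  | [] => (1, 0, 0, 1)
  | x :: t => (x * (mA t).1 - (mA t).2.2.1, x * (mA t).2.1 - (mA t).2.2.2,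
      (mA t).1, (mA t).2.1)

lemma mA_append (l : List ℤ) (x : ℤ) :
    mA (l ++ [x]) = ((mA l).1 * x + (mA l).2.1, -(mA l).1,
      (mA l).2.2.1 * x + (mA l).2.2.2, -(mA l).2.2.1) := by
  induction l with
  | nil => simp [mA]
  | cons y t ih =>
      simp only [List.cons_append, mA, List.append_eq, Prod.mk.injEq] at ih ⊢
      rw [ih]
      refine ⟨by ring, by ring, rfl, rfl⟩

lemma wahl_two_le (l : List ℤ) (h : IsWahl l) : ∀ x ∈ l, 2 ≤ x := by
  induction h with
  | base => intro x hx; simp at hx; omega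
  | left l a hw ih =>
      have ha : 2 ≤ a := ih a (List.mem_append.mpr (Or.inr (List.mem_singleton_self a)))
      intro x hx
      rcases List.mem_cons.mp hx with rfl | hx
      · norm_num
      rcases List.mem_append.mp hx with hx | hx
      · exact ih x (List.mem_append.mpr (Or.inl hx))
      · rw [List.mem_singleton.mp hx]; omega
  | right a l hw ih =>
      have ha : 2 ≤ a := ih a List.mem_cons_self
      intro x hx
      rcases List.mem_cons.mp hx with rfl | hx
      · omega
      rcases List.mem_append.mp hx with hx | hx
      · exact ih x (List.mem_cons_of_mem a hx)
      · rw [List.mem_singleton.mp hx]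

lemma hj_eq (l : List ℤ) (h : ∀ x ∈ l, 2 ≤ x) :
    (mA l).2.2.1 < (mA l).1 ∧ 0 ≤ (mA l).2.2.1 ∧
      hj l = ((mA l).1 : ℚ) / ((mA l).2.2.1 : ℚ) := by
  induction l with
  | nil => simp [mA, hj]
  | cons x t ih =>
      obtain ⟨h1, h2, h3⟩ := ih (fun y hy => h y (List.mem_cons_of_mem _ hy))
      have hx : 2 ≤ x := h x List.mem_cons_self
      set A := (mA t).1 with hA
      set C := (mA t).2.2.1 with hC
      have hApos : 0 < A := lt_of_le_of_lt h2 h1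
      have hAQ : (A : ℚ) ≠ 0 := by exact_mod_cast hApos.ne'
      refine ⟨?_, by simpa [mA] using hApos.le, ?_⟩
      · show A < x * A - C
        nlinarith
      · show hj (x :: t) = ((x * A - C : ℤ) : ℚ) / (A : ℚ)
        rw [hj, h3, one_div_div]
        field_simp
        norm_cast

lemma wahl_mA (l : List ℤ) (h : IsWahl l) :
    ∃ m a : ℤ, 0 < a ∧ a < m ∧ IsCoprime a m ∧
      mA l = (m ^ 2, -(m * (m - a) - 1), m * a - 1, 1 - a * (m - a)) := by
  induction h with
  | base =>
      exact ⟨2, 1, one_pos, by norm_num, isCoprime_one_left, by norm_num [mA]⟩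
  | left l a hw ih =>
      obtain ⟨m, k, hk, hkm, hcop, heq⟩ := ih
      rw [mA_append] at heq
      simp only [Prod.mk.injEq] at heq
      obtain ⟨h1, h2, h3, h4⟩ := heq
      refine ⟨2 * m - k, m, by omega, by omega, ?_, ?_⟩
      · -- IsCoprime m (2*m - k)
        have : IsCoprime m (k + m * (-2)) := hcop.symm.add_mul_left_right (-2)
        have := this.neg_right
        rwa [show -(k + m * (-2)) = 2 * m - k by ring] at this
      · simp only [mA, mA_append, Prod.mk.injEq]
        refine ⟨?_, ?_, ?_, ?_⟩
        · linear_combination 2 * h1 - h3 - 2 * h2 + h4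
        · linear_combination 2 * h2 - h4
        · linear_combination h1 - h2
        · linear_combination h2
  | right a l hw ih =>
      obtain ⟨m, k, hk, hkm, hcop, heq⟩ := ih
      simp only [mA, Prod.mk.injEq] at heq
      obtain ⟨h1, h2, h3, h4⟩ := heq
      refine ⟨m + k, k, hk, by omega, ?_, ?_⟩
      · have : IsCoprime k (m + k * 1) := hcop.add_mul_left_right 1
        rwa [mul_one] at this
      · simp only [mA, mA_append, Prod.mk.injEq]
        refine ⟨?_, ?_, ?_, ?_⟩
        · linear_combination 2 * h1 + h2 + 2 * h3 + h4
        · linear_combination -h1 - h3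
        · linear_combination 2 * h3 + h4
        · linear_combination -h3

/-- Every Wahl continued fraction equals `m²/(ma-1)` for some coprime
integers `0 < a < m`. -/
theorem stmt7 (l : List ℤ) (h : IsWahl l) :
    ∃ m a : ℤ, 0 < a ∧ a < m ∧ IsCoprime a m ∧
      hj l = (m : ℚ) ^ 2 / ((m : ℚ) * a - 1) := by
  obtain ⟨m, a, ha, ham, hcop, heq⟩ := wahl_mA l h
  obtain ⟨-, -, h3⟩ := hj_eq l (wahl_two_le l h)
  refine ⟨m, a, ha, ham, hcop, ?_⟩
  rw [h3, heq]
  push_cast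
  ring_nf
end

section
/- A sequence {a_1,...,a_r} of positive integers is a zero continued fraction (admissible with value 0) if and only if there exists a triangulation of a convex polygon with vertices P_0, P_1, ..., P_r such that the number of triangles having P_i as a vertex equals a_i for every 1 ≤ i ≤ r. -/
/-- Partial numerators of a list: `p_0 = 1`, `p_1 = a_1`,
`p_i = a_i p_{i-1} - p_{i-2}`. -/
def pNum (l : List ℤ) : ℕ → ℤ
  | 0 => 1
  | 1 => l.getD 0 0
  | (i + 2) => l.getD (i + 1) 0 * pNum l (i + 1) - pNum l i

/-- A sequence is admissible if its partial numerators `p_i` are positive for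
all `i < r`. -/
def admissible (l : List ℤ) : Prop := ∀ i, 1 ≤ i → i < l.length → 0 < pNum l i

/-- `IsTriangulation l T` : `T` is (the set of triangles of) a triangulation of
the convex polygon with vertices listed in convex position by `l`.  Every
triangulation of a convex polygon arises from a triangle by successively
cutting off "ears". -/
inductive IsTriangulation : List ℕ → Finset (Finset ℕ) → Prop
  | tri (i j k : ℕ) : IsTriangulation [i, j, k] {({i, j, k} : Finset ℕ)}
  | ear (l1 : List ℕ) (x y z : ℕ) (l2 : List ℕ) (T : Finset (Finset ℕ)) :
      IsTriangulation (l1 ++ x :: z :: l2) T →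
      IsTriangulation (l1 ++ x :: y :: z :: l2) (insert {x, y, z} T)

namespace ZCF

def stepv (a : ℤ) (v : ℤ × ℤ) : ℤ × ℤ := (a * v.1 - v.2, v.1)

def steps (l : List ℤ) (v : ℤ × ℤ) : ℤ × ℤ := l.foldl (fun v a => stepv a v) v

@[simp] lemma steps_nil (v : ℤ × ℤ) : steps [] v = v := rfl
@[simp] lemma steps_cons (a : ℤ) (l : List ℤ) (v : ℤ × ℤ) :
    steps (a :: l) v = steps l (stepv a v) := rfl
lemma steps_append (s t : List ℤ) (v : ℤ × ℤ) :
    steps (s ++ t) v = steps t (steps s v) := by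
  simp [steps, List.foldl_append]

def posSteps : List ℤ → ℤ × ℤ → Prop
  | [], _ => True
  | a :: t, v => 0 < (stepv a v).1 ∧ posSteps t (stepv a v)

@[simp] lemma posSteps_nil (v : ℤ × ℤ) : posSteps [] v := trivial
lemma posSteps_cons (a : ℤ) (t : List ℤ) (v : ℤ × ℤ) :
    posSteps (a :: t) v ↔ 0 < (stepv a v).1 ∧ posSteps t (stepv a v) := Iff.rfl

def ZAux : List ℤ → ℤ × ℤ → Prop
  | [], _ => False
  | [a], v => a * v.1 - v.2 = 0
  | a :: b :: t, v => 0 < (stepv a v).1 ∧ ZAux (b :: t) (stepv a v)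

def Zl (l : List ℤ) : Prop := ZAux l (1, 0)

@[simp] lemma ZAux_nil (v : ℤ × ℤ) : ¬ ZAux [] v := fun h => h
@[simp] lemma ZAux_single (a : ℤ) (v : ℤ × ℤ) : ZAux [a] v ↔ a * v.1 - v.2 = 0 := Iff.rfl

lemma ZAux_cons (a : ℤ) (t : List ℤ) (v : ℤ × ℤ) (ht : t ≠ []) :
    ZAux (a :: t) v ↔ 0 < (stepv a v).1 ∧ ZAux t (stepv a v) := by
  cases t with
  | nil => exact absurd rfl ht
  | cons b t' => exact Iff.rfl

lemma ZAux_ne_nil {l : List ℤ} {v : ℤ × ℤ} (h : ZAux l v) : l ≠ [] := by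
  rintro rfl; exact h

lemma ZAux_append (s X : List ℤ) (v : ℤ × ℤ) (hX : X ≠ []) :
    ZAux (s ++ X) v ↔ posSteps s v ∧ ZAux X (steps s v) := by
  induction s generalizing v with
  | nil => simp
  | cons a s ih =>
    rw [List.cons_append, ZAux_cons _ _ _ (by simp [hX]), ih, posSteps_cons, and_assoc,
      steps_cons]

lemma ZAux_iff (l : List ℤ) (v : ℤ × ℤ) :
    ZAux l v ↔ l ≠ [] ∧ posSteps l.dropLast v ∧ (steps l v).1 = 0 := by
  induction l generalizing v with
  | nil => simp
  | cons a t ih =>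
    cases t with
    | nil => simp [stepv]
    | cons b t' =>
      rw [ZAux_cons _ _ _ (by simp), ih]
      simp only [List.dropLast_cons_of_ne_nil (by simp : (b :: t') ≠ []), posSteps_cons,
        steps_cons, ne_eq, List.cons_ne_nil, not_false_eq_true, true_and, and_assoc]

end ZCF

namespace ZCF

lemma pNum_steps (l : List ℤ) : ∀ i, i < l.length →
    steps (l.take (i+1)) (1, 0) = (pNum l (i+1), pNum l i) := by
  intro i
  induction i with
  | zero =>
    intro hi
    cases l with
    | nil => simp at hi
    | cons a t => simp [pNum, stepv]
  | succ i ih =>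
    intro hi
    have h1 : i < l.length := by omega
    have : l.take (i + 2) = l.take (i + 1) ++ [l[i + 1]] := by
      rw [List.take_succ, List.getElem?_eq_getElem hi]
      rfl
    rw [this, steps_append, ih h1]
    simp [stepv, pNum, List.getElem?_eq_getElem hi]

lemma posSteps_iff (s : List ℤ) (v : ℤ × ℤ) :
    posSteps s v ↔ ∀ i < s.length, 0 < (steps (s.take (i+1)) v).1 := by
  induction s generalizing v with
  | nil => simp
  | cons a t ih =>
    rw [posSteps_cons, ih]
    constructor
    · rintro ⟨h1, h2⟩ i hi
      cases i with
      | zero => simpa [stepv] using h1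
      | succ j => simpa using h2 j (by simpa using hi)
    · intro h
      refine ⟨by simpa [stepv] using h 0 (by simp), fun j hj => ?_⟩
      simpa using h (j+1) (by simpa using hj)

lemma Zl_iff (l : List ℤ) (hne : l ≠ []) :
    Zl l ↔ admissible l ∧ pNum l l.length = 0 := by
  have hlen : 1 ≤ l.length := List.length_pos_iff.mpr hne
  rw [Zl, ZAux_iff]
  have hfst : (steps l (1, 0)).1 = pNum l l.length := by
    have := pNum_steps l (l.length - 1) (by omega)
    rw [show l.length - 1 + 1 = l.length by omega, List.take_length] at this
    rw [this]
  have hadm : posSteps l.dropLast (1, 0) ↔ admissible l := by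
    rw [posSteps_iff]
    have hdl : l.dropLast.length = l.length - 1 := List.length_dropLast
    constructor
    · intro h i h1 h2
      have hi : i - 1 < l.dropLast.length := by omega
      have := h (i - 1) hi
      rw [show l.dropLast.take (i - 1 + 1) = l.take i by
        rw [List.dropLast_eq_take, List.take_take]
        congr 1
        omega] at this
      have hps := pNum_steps l (i - 1) (by omega)
      rw [show i - 1 + 1 = i by omega] at hps
      rw [hps] at this
      exact this
    · intro h i hi
      rw [show l.dropLast.take (i + 1) = l.take (i+1) by
        rw [List.dropLast_eq_take, List.take_take]
        congr 1
        omega]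
      rw [pNum_steps l i (by omega)]
      exact h (i+1) (by omega) (by omega)
  rw [hfst, hadm]
  tauto

end ZCF
namespace ZCF

@[simp] lemma hj_nil : hj [] = 0 := rfl
lemma hj_cons (a : ℤ) (t : List ℤ) : hj (a :: t) = (a : ℚ) - 1 / hj t := rfl

lemma hj_append_zero (s t : List ℤ) (h : hj t = 0) : hj (s ++ t) = hj s := by
  induction s with
  | nil => simpa using h
  | cons a s ih => simp [hj_cons, ih]

lemma hj_congr (s : List ℤ) {X Y : List ℤ} (h : hj X = hj Y) :
    hj (s ++ X) = hj (s ++ Y) := by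
  induction s with
  | nil => simpa using h
  | cons a s ih => simp [hj_cons, ih]

def myK : List ℤ → ℤ
  | [] => 1
  | [a] => a
  | a :: b :: t => a * myK (b :: t) - myK t

lemma steps_myK (a : ℤ) (t : List ℤ) (x y : ℤ) :
    (steps (a :: t) (x, y)).1 = x * myK (a :: t) - y * myK t := by
  induction t generalizing a x y with
  | nil => simp [stepv, myK]; ring
  | cons b t' ih =>
    rw [steps_cons, show stepv a (x, y) = (a * x - y, x) from rfl, ih]
    simp only [myK]
    ring

lemma myK_hj (l : List ℤ) (hne : l ≠ [])
    (hnj : ∀ t, t <:+ l → t ≠ l → t ≠ [] → hj t ≠ 0) :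
    (myK l : ℚ) = myK l.tail * hj l := by
  induction l with
  | nil => exact absurd rfl hne
  | cons a t ih =>
    cases t with
    | nil => simp [myK, hj_cons]
    | cons b t' =>
      have htne : (b :: t') ≠ [] := by simp
      have hsuf : (b :: t') <:+ a :: b :: t' := List.suffix_cons a _
      have hhjt : hj (b :: t') ≠ 0 :=
        hnj _ hsuf (by intro he; have := congrArg List.length he; simp at this) htne
      have iht := ih htne (fun u hu hune hune2 =>
        hnj u (hu.trans hsuf)
          (fun he => by
            have := hu.length_le
            rw [he] at this
            simp at this) hune2)
      have : (myK (b :: t') : ℚ) / hj (b :: t') = myK (b :: t').tail := by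
        rw [iht]
        field_simp
      rw [hj_cons]
      have hm : (myK (a :: b :: t') : ℚ) = a * myK (b :: t') - myK t' := by
        simp [myK]
      rw [hm]
      rw [List.tail_cons]
      field_simp
      have ht' : ((b :: t').tail : List ℤ) = t' := rfl
      rw [ht'] at iht
      rw [iht]
      ring

lemma pNum_prefix (s l : List ℤ) (hp : s <+: l) : ∀ i, i ≤ s.length → pNum s i = pNum l i := by
  have hg : ∀ j, j < s.length → s.getD j 0 = l.getD j 0 := by
    intro j hj
    obtain ⟨t, rfl⟩ := hp
    rw [List.getD_eq_getElem s 0 hj,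
      List.getD_eq_getElem _ 0 (by simp; omega), List.getElem_append_left hj]
  intro i
  induction i using Nat.strong_induction_on with
  | _ i ih =>
    match i with
    | 0 => intro _; rfl
    | 1 => intro h1; simp only [pNum]; exact hg 0 (by omega)
    | (j+2) =>
      intro hle
      simp only [pNum]
      rw [hg (j+1) (by omega), ih (j+1) (by omega) (by omega), ih j (by omega) (by omega)]

lemma step2_aux : ∀ (n : ℕ) (l : List ℤ), l.length ≤ n → l ≠ [] → admissible l → hj l = 0 → Zl l := by
  intro n
  induction n with
  | zero => intro l hlen hne; exact absurd (List.eq_nil_of_length_eq_zero (by omega)) hne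
  | succ n ih =>
  intro l hlen hne hadm hhj
  by_cases hnj : ∀ t, t <:+ l → t ≠ l → t ≠ [] → hj t ≠ 0
  · -- no junk: direct identity
    have hK : (myK l : ℚ) = myK l.tail * hj l := myK_hj l hne hnj
    rw [hhj, mul_zero] at hK
    have hK0 : myK l = 0 := by exact_mod_cast hK
    rw [Zl_iff l hne]
    refine ⟨hadm, ?_⟩
    obtain ⟨a, t, rfl⟩ : ∃ a t, l = a :: t := by
      cases l with
      | nil => exact absurd rfl hne
      | cons a t => exact ⟨a, t, rfl⟩
    have := pNum_steps (a :: t) ((a :: t).length - 1) (by simp)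
    rw [show (a :: t).length - 1 + 1 = (a :: t).length by simp, List.take_length] at this
    have h1 : (steps (a :: t) (1, 0)).1 = pNum (a :: t) (a :: t).length := by rw [this]
    rw [← h1, steps_myK]
    rw [hK0]
    ring
  · push_neg at hnj
    obtain ⟨t, hsuf, htne, htne2, hhjt⟩ := hnj
    obtain ⟨s, rfl⟩ := hsuf
    have hsne : s ≠ [] := by
      rintro rfl
      exact htne rfl
    exfalso
    -- s is a strict prefix of l with hj s = 0 and admissible, contradiction with adm at |s|
    have hhjs : hj s = 0 := by
      have := hj_append_zero s t hhjt
      rw [hhj] at this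
      exact this.symm
    have hadms : admissible s := by
      intro i h1 h2
      rw [pNum_prefix s (s ++ t) ⟨t, rfl⟩ i (by omega)]
      exact hadm i h1 (by simp; omega)
    have hZ : Zl s := ih s (by
      have h1 := List.length_pos_iff.mpr htne2
      have h2 : (s ++ t).length = s.length + t.length := by simp
      omega) hsne hadms hhjs
    rw [Zl_iff s hsne] at hZ
    have := hadm s.length (by
      have := List.length_pos_iff.mpr hsne
      omega) (by
      have := List.length_pos_iff.mpr htne2
      simp
      omega)
    rw [← pNum_prefix s (s ++ t) ⟨t, rfl⟩ s.length le_rfl] at this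
    omega

lemma step2 (l : List ℤ) (hne : l ≠ []) (hadm : admissible l) (hhj : hj l = 0) : Zl l :=
  step2_aux l.length l le_rfl hne hadm hhj

end ZCF
namespace ZCF

lemma stepv_fst (a x y : ℤ) : (stepv a (x, y)).1 = a * x - y := rfl

lemma ZAux_seed {t : List ℤ} {v w : ℤ × ℤ} (h : v = w) : ZAux t v ↔ ZAux t w := by rw [h]

lemma zaux_shift (b : ℤ) (post : List ℤ) (p X : ℤ) :
    ZAux ((b+1) :: post) (p, p + X) ↔ ZAux (b :: post) (p, X) := by
  cases post with
  | nil =>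
    simp only [ZAux_single]
    constructor <;> intro h <;> linear_combination h
  | cons c p' =>
    rw [ZAux_cons (b+1) (c :: p') _ (by simp), ZAux_cons b (c :: p') _ (by simp)]
    have f1 : stepv (b+1) (p, p + X) = (b*p - X, p) := by
      simp only [stepv]
      rw [Prod.mk.injEq]
      exact ⟨by ring, rfl⟩
    have f2 : stepv b (p, X) = (b*p - X, p) := by
      simp only [stepv]
    rw [f1, f2]

lemma zl_front_iff (b : ℤ) (t : List ℤ) : Zl (1 :: (b+1) :: t) ↔ Zl (b :: t) := by
  unfold Zl
  rw [ZAux_cons _ _ _ (by simp)]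
  have hs : stepv 1 ((1:ℤ), (0:ℤ)) = ((1:ℤ), 1 + 0) := by simp [stepv]
  rw [hs]
  have h1 : (0:ℤ) < ((1:ℤ), (1:ℤ)+0).1 := by norm_num
  rw [iff_true_intro h1, true_and, zaux_shift]

lemma zaux_mid_iff (a b : ℤ) (post : List ℤ) :
    ∀ (s : List ℤ) (v : ℤ × ℤ), 0 < v.1 →
      (ZAux (s ++ (a+1) :: 1 :: (b+1) :: post) v ↔ ZAux (s ++ a :: b :: post) v) := by
  intro s
  induction s with
  | nil =>
    rintro ⟨x, y⟩ hx
    simp only [List.nil_append] at *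
    replace hx : 0 < x := hx
    constructor
    · intro h
      rw [ZAux_cons _ _ _ (by simp)] at h
      obtain ⟨h1, h2⟩ := h
      rw [ZAux_cons _ _ _ (by simp)] at h2
      obtain ⟨h2a, h2b⟩ := h2
      rw [show stepv 1 (stepv (a+1) (x, y)) = (a*x - y, (a*x - y) + x) by
        simp only [stepv]; rw [Prod.mk.injEq]; exact ⟨by ring, by ring⟩] at h2b
      rw [zaux_shift] at h2b
      rw [show stepv 1 (stepv (a+1) (x, y)) = (a*x - y, (a*x - y) + x) by
        simp only [stepv]; rw [Prod.mk.injEq]; exact ⟨by ring, by ring⟩] at h2a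
      simp only at h2a
      rw [ZAux_cons _ _ _ (by simp)]
      rw [show stepv a (x, y) = (a*x - y, x) from rfl]
      exact ⟨by simpa using h2a, h2b⟩
    · intro h
      rw [ZAux_cons _ _ _ (by simp)] at h
      rw [show stepv a (x, y) = (a*x - y, x) from rfl] at h
      obtain ⟨h1, h2⟩ := h
      simp only at h1
      rw [ZAux_cons _ _ _ (by simp)]
      rw [show stepv (a+1) (x, y) = ((a+1)*x - y, x) from rfl]
      refine ⟨by simp; nlinarith, ?_⟩
      rw [ZAux_cons _ _ _ (by simp)]
      rw [show stepv 1 ((a+1)*x - y, x) = (a*x - y, (a*x - y) + x) by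
        simp only [stepv]; rw [Prod.mk.injEq]; exact ⟨by ring, by ring⟩]
      refine ⟨by simpa using h1, ?_⟩
      rw [zaux_shift]
      exact h2
  | cons c s' ih =>
    rintro ⟨x, y⟩ hx
    simp only [List.cons_append]
    rw [ZAux_cons _ _ _ (by simp), ZAux_cons _ _ _ (by simp)]
    constructor
    · rintro ⟨h1, h2⟩
      exact ⟨h1, (ih _ (by simpa [stepv] using h1)).mp h2⟩
    · rintro ⟨h1, h2⟩
      exact ⟨h1, (ih _ (by simpa [stepv] using h1)).mpr h2⟩

lemma steps_pos (s : List ℤ) (v : ℤ × ℤ) (hps : posSteps s v) (hv : 0 < v.1) (hne : s ≠ []) :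
    0 < (steps s v).1 ∧ 0 < (steps s v).2 := by
  induction s generalizing v with
  | nil => exact absurd rfl hne
  | cons a t ih =>
    obtain ⟨h1, h2⟩ := hps
    cases t with
    | nil => exact ⟨h1, by simpa [stepv] using hv⟩
    | cons b t' => exact ih (stepv a v) h2 h1 (by simp)

lemma search : ∀ (l : List ℤ) (x y : ℤ), (∀ a ∈ l, 0 < a) → 0 ≤ y → y < x → ZAux l (x, y) →
    ∃ s t, l = s ++ 1 :: t ∧ (∀ c ∈ s, 2 ≤ c) ∧ t ≠ [] := by
  intro l
  induction l with
  | nil => intro x y _ _ _ h; exact absurd h (ZAux_nil _)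
  | cons a t ih =>
    intro x y hpos hy hyx hZ
    cases t with
    | nil =>
      exfalso
      rw [ZAux_single] at hZ
      have ha : 0 < a := hpos a (by simp)
      nlinarith
    | cons b t' =>
      rw [ZAux_cons _ _ _ (by simp)] at hZ
      obtain ⟨h1, h2⟩ := hZ
      rw [stepv_fst] at h1
      by_cases ha1 : a = 1
      · exact ⟨[], b :: t', by rw [ha1]; rfl, by simp, by simp⟩
      · have ha2 : 2 ≤ a := by
          have := hpos a (by simp)
          omega
        have hinv : x < a * x - y := by nlinarith
        have e : stepv a (x, y) = (a*x - y, x) := rfl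
        rw [ZAux_seed e] at h2
        obtain ⟨s', t'', heq, hs', ht''⟩ :=
          ih (a*x - y) x (fun c hc => hpos c (by simp [hc])) (by omega) hinv h2
        exact ⟨a :: s', t'', by rw [heq]; rfl, by
          intro c hc
          rcases List.mem_cons.mp hc with rfl | hc
          · exact ha2
          · exact hs' c hc, ht''⟩

lemma blowdown (l : List ℤ) (hpos : ∀ a ∈ l, 0 < a) (hlen : 3 ≤ l.length) (hZ : Zl l) :
    (∃ b t, 1 ≤ b ∧ l = 1 :: (b+1) :: t ∧ Zl (b :: t)) ∨
    (∃ s a b t, 1 ≤ a ∧ 1 ≤ b ∧ l = s ++ (a+1) :: 1 :: (b+1) :: t ∧ Zl (s ++ a :: b :: t)) := by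
  obtain ⟨s, t, rfl, hs2, htne⟩ := search l 1 0 hpos le_rfl one_pos hZ
  -- seed at the split
  have hZorig := hZ
  have hX : (1 :: t) ≠ [] := by simp
  rw [Zl, ZAux_append _ _ _ hX] at hZ
  obtain ⟨hps, hZ'⟩ := hZ
  set p := (steps s (1, 0)).1 with hp
  set q := (steps s (1, 0)).2 with hq
  have hpq : (0 < p ∧ 0 ≤ q) ∧ (s ≠ [] → 0 < q) := by
    constructor
    · rcases eq_or_ne s [] with rfl | hsne
      · simp [hp, hq]
      · have := steps_pos s (1, 0) hps (by norm_num) hsne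
        exact ⟨this.1, le_of_lt this.2⟩
    · intro hsne
      exact (steps_pos s (1, 0) hps (by norm_num) hsne).2
  obtain ⟨⟨hp0, hq0⟩, hqpos⟩ := hpq
  have hZ1 : ZAux (1 :: t) ((p, q) : ℤ × ℤ) := by
    rw [show ((p, q) : ℤ × ℤ) = steps s (1, 0) from rfl]
    exact hZ'
  -- t = c :: t'' with c ≥ 2
  obtain ⟨c, t'', rfl⟩ : ∃ c t'', t = c :: t'' := by
    cases t with
    | nil => exact absurd rfl htne
    | cons c t'' => exact ⟨c, t'', rfl⟩
  rw [ZAux_cons _ _ _ (by simp)] at hZ1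
  obtain ⟨hZ1a, hZ1b⟩ := hZ1
  rw [stepv_fst] at hZ1a
  have e : stepv 1 (p, q) = (p - q, p) := by simp [stepv]
  rw [ZAux_seed e] at hZ1b
  have hc2 : 2 ≤ c := by
    by_contra hc
    have hc1 : c = 1 := by
      have := hpos c (by simp)
      omega
    subst hc1
    cases t'' with
    | nil =>
      rw [ZAux_single] at hZ1b
      simp only at hZ1b
      have hq0' : q = 0 := by linarith [hZ1b]
      have hsne : s ≠ [] := by
        intro hs
        subst hs
        simp at hlen
      have := hqpos hsne
      omega
    | cons d t3 =>
      rw [ZAux_cons _ _ _ (by simp)] at hZ1b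
      have := hZ1b.1
      rw [stepv_fst] at this
      have h' : (0:ℤ) < 1 * (p - q) - p := this
      omega
  obtain ⟨b, rfl⟩ : ∃ b, c = b + 1 := ⟨c - 1, by omega⟩
  have hb1 : 1 ≤ b := by omega
  rcases eq_or_ne s [] with rfl | hsne
  · left
    refine ⟨b, t'', hb1, by simp, ?_⟩
    rw [← zl_front_iff]
    simpa using hZorig
  · right
    obtain ⟨s', e', rfl⟩ : ∃ s' e', s = s' ++ [e'] := by
      rcases List.eq_nil_or_concat s with rfl | ⟨s', e', rfl⟩
      · exact absurd rfl hsne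
      · exact ⟨s', e', by simp⟩
    have he2 : 2 ≤ e' := hs2 e' (by simp)
    obtain ⟨a, rfl⟩ : ∃ a, e' = a + 1 := ⟨e' - 1, by omega⟩
    have ha1 : 1 ≤ a := by omega
    refine ⟨s', a, b, t'', ha1, hb1, by simp, ?_⟩
    have hl : (s' ++ [a+1]) ++ 1 :: (b+1) :: t'' = s' ++ (a+1) :: 1 :: (b+1) :: t'' := by simp
    rw [hl] at hZorig
    exact (zaux_mid_iff a b t'' s' (1,0) (by norm_num)).mp hZorig

end ZCF
namespace ZCF

lemma suffix_append_cases {α : Type} (s X t' : List α) (h : t' <:+ s ++ X) :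
    t' <:+ X ∨ ∃ s', s' <:+ s ∧ t' = s' ++ X := by
  induction s with
  | nil => left; simpa using h
  | cons a s ih =>
    rw [List.cons_append, List.suffix_cons_iff] at h
    rcases h with rfl | h
    · right; exact ⟨a :: s, List.suffix_rfl, by simp⟩
    · rcases ih h with h | ⟨s', hs', rfl⟩
      · left; exact h
      · right; exact ⟨s', hs'.trans (List.suffix_cons a s), rfl⟩

lemma ne_of_suffix_lt {α : Type} {s t : List α} (h : s.length < t.length) : s ≠ t := by
  intro he; rw [he] at h; omega

lemma step3_aux : ∀ (n : ℕ) (l : List ℤ), l.length ≤ n → (∀ a ∈ l, 0 < a) → Zl l →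
    hj l = 0 ∧ ∀ t, t <:+ l → t ≠ l → t ≠ [] → 0 < hj t := by
  intro n
  induction n with
  | zero =>
    intro l hlen _ hZ
    have hnil : l = [] := List.eq_nil_of_length_eq_zero (by omega)
    subst hnil
    exact absurd hZ (ZAux_nil _)
  | succ n ih =>
    intro l hlen hpos hZ
    match hl3 : l, (by omega : l.length ≤ n + 1) with
    | [], _ => exact absurd hZ (ZAux_nil _)
    | [a], _ =>
      exfalso
      rw [Zl, ZAux_single] at hZ
      have := hpos a (by simp)
      omega
    | [a, b], _ =>
      rw [Zl, ZAux_cons _ _ _ (by simp), ZAux_single] at hZ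
      obtain ⟨h1, h2⟩ := hZ
      simp only [stepv] at h1 h2
      have ha : 0 < a := hpos a (by simp)
      have hb : 0 < b := hpos b (by simp)
      have ha1 : a = 1 := by nlinarith
      have hb1 : b = 1 := by nlinarith
      subst ha1; subst hb1
      constructor
      · simp [hj_cons]
      · intro t ht htne htne2
        rw [List.suffix_cons_iff] at ht
        rcases ht with rfl | ht
        · exact absurd rfl htne
        · rw [List.suffix_cons_iff] at ht
          rcases ht with rfl | ht
          · norm_num [hj_cons]
          · rw [List.suffix_nil] at ht
            exact absurd ht htne2
    | (c :: d :: e :: l'), _ =>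
      set L := c :: d :: e :: l' with hL
      have hlen3 : 3 ≤ L.length := by simp [hL]
      rcases blowdown L hpos hlen3 hZ with ⟨b, t, hb1, hEq, hZ'⟩ | ⟨s, a, b, t, ha1, hb1, hEq, hZ'⟩
      · -- front case : L = 1 :: (b+1) :: t
        have hpos' : ∀ x ∈ b :: t, 0 < x := by
          intro x hx
          rcases List.mem_cons.mp hx with rfl | hx
          · omega
          · exact hpos x (by rw [hEq]; simp [hx])
        have hlen' : (b :: t).length ≤ n := by
          have := congrArg List.length hEq
          simp at this
          simp
          omega
        obtain ⟨h0, hsuf⟩ := ih (b :: t) hlen' hpos' hZ'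
        have h1 : hj ((b+1) :: t) = 1 := by
          rw [hj_cons] at h0 ⊢
          push_cast
          linarith
        have hjl : hj L = 0 := by
          rw [hEq, hj_cons, h1]
          norm_num
        refine ⟨hjl, ?_⟩
        intro t' ht' htne htne2
        rw [hEq] at ht'
        rw [List.suffix_cons_iff] at ht'
        rcases ht' with rfl | ht'
        · exact absurd hEq.symm htne
        · rw [List.suffix_cons_iff] at ht'
          rcases ht' with rfl | ht'
          · rw [h1]; norm_num
          · refine hsuf t' (ht'.trans (List.suffix_cons b t)) ?_ htne2
            apply ne_of_suffix_lt
            have := ht'.length_le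
            simp
            omega
      · -- interior case : L = s ++ (a+1) :: 1 :: (b+1) :: t
        have hpos' : ∀ x ∈ s ++ a :: b :: t, 0 < x := by
          intro x hx
          simp only [List.mem_append, List.mem_cons] at hx
          rcases hx with hx | rfl | rfl | hx
          · exact hpos x (by rw [hEq]; simp [hx])
          · omega
          · omega
          · exact hpos x (by rw [hEq]; simp [hx])
        have hlenEq := congrArg List.length hEq
        simp at hlenEq
        have hlen' : (s ++ a :: b :: t).length ≤ n := by
          simp
          omega
        obtain ⟨h0, hsuf⟩ := ih _ hlen' hpos' hZ'
        set u := hj (b :: t) with hu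
        have hbt_suf : (b :: t) <:+ (s ++ a :: b :: t) := by
          refine ⟨s ++ [a], by simp⟩
        have hupos : 0 < u := by
          refine hsuf _ hbt_suf (ne_of_suffix_lt (by simp; omega)) (by simp)
        have hune : u ≠ 0 := ne_of_gt hupos
        have hu1pos : 0 < u + 1 := by linarith
        have hu1ne : u + 1 ≠ 0 := ne_of_gt hu1pos
        have h1 : hj ((b+1) :: t) = u + 1 := by
          rw [hj_cons]
          rw [hu, hj_cons]
          push_cast
          ring
        have h2 : hj (1 :: (b+1) :: t) = u / (u + 1) := by
          rw [hj_cons, h1]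
          push_cast
          field_simp
          ring
        have h2pos : 0 < hj (1 :: (b+1) :: t) := by
          rw [h2]; exact div_pos hupos hu1pos
        have h3 : hj ((a+1) :: 1 :: (b+1) :: t) = hj (a :: b :: t) := by
          rw [hj_cons, h2, hj_cons, hu]
          push_cast
          rw [div_div_eq_mul_div]
          have hne' : hj (b :: t) ≠ 0 := hune
          have hne'' : hj (b :: t) + 1 ≠ 0 := hu1ne
          field_simp
          ring
        have hjl : hj L = 0 := by
          rw [hEq, hj_congr s h3, ← h0]
        refine ⟨hjl, ?_⟩
        intro t' ht' htne htne2
        rw [hEq] at ht'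
        rcases suffix_append_cases s _ t' ht' with hA | ⟨s'', hs'', rfl⟩
        · -- t' is a suffix of the block
          rw [List.suffix_cons_iff] at hA
          rcases hA with rfl | hA
          · -- t' = (a+1) :: 1 :: (b+1) :: t : equals hj (a::b::t)
            rcases eq_or_ne s [] with rfl | hsne
            · exact absurd hEq.symm (by simpa using htne)
            · rw [h3]
              refine hsuf _ ⟨s, rfl⟩ (ne_of_suffix_lt ?_) (by simp)
              have hsl : 0 < s.length := List.length_pos_iff.mpr hsne
              simp
              omega
          · rw [List.suffix_cons_iff] at hA
            rcases hA with rfl | hA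
            · exact h2pos
            · rw [List.suffix_cons_iff] at hA
              rcases hA with rfl | hA
              · rw [h1]; exact hu1pos
              · refine hsuf t' (hA.trans ⟨s ++ [a, b], by simp⟩) (ne_of_suffix_lt ?_) htne2
                have := hA.length_le
                simp
                omega
        · -- t' = s'' ++ block with s'' a suffix of s
          rcases eq_or_ne s'' s with rfl | hne
          · exact absurd hEq.symm htne
          · have hslt : s''.length < s.length := by
              have := hs''.length_le
              rcases lt_or_eq_of_le this with h | h
              · exact h
              · exact absurd (hs''.eq_of_length h) hne
            rw [hj_congr s'' h3]
            obtain ⟨w, rfl⟩ := hs''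
            simp only [List.length_append] at hslt
            refine hsuf _ ⟨w, by simp⟩ (ne_of_suffix_lt (by simp; omega)) (by simp)

lemma step3 (l : List ℤ) (hpos : ∀ a ∈ l, 0 < a) (hZ : Zl l) : hj l = 0 :=
  (step3_aux l.length l le_rfl hpos hZ).1

end ZCF
namespace ZCF

def cnt (T : Finset (Finset ℕ)) (v : ℕ) : ℕ := (T.filter (fun t => v ∈ t)).card

lemma cnt_insert_mem (T : Finset (Finset ℕ)) (s : Finset ℕ) (hs : s ∉ T) (v : ℕ) (hv : v ∈ s) :
    cnt (insert s T) v = cnt T v + 1 := by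
  unfold cnt
  rw [Finset.filter_insert, if_pos hv, Finset.card_insert_of_notMem]
  intro h
  exact hs (Finset.mem_of_mem_filter s h)

lemma cnt_insert_not_mem (T : Finset (Finset ℕ)) (s : Finset ℕ) (v : ℕ) (hv : v ∉ s) :
    cnt (insert s T) v = cnt T v := by
  unfold cnt
  rw [Finset.filter_insert, if_neg hv]

lemma cnt_zero (T : Finset (Finset ℕ)) (v : ℕ) (h : ∀ t ∈ T, v ∉ t) : cnt T v = 0 := by
  unfold cnt
  rw [Finset.card_eq_zero, Finset.filter_eq_empty_iff]
  exact h

lemma tri_len {L : List ℕ} {T : Finset (Finset ℕ)} (h : IsTriangulation L T) : 3 ≤ L.length := by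
  induction h with
  | tri i j k => simp
  | ear l1 x y z l2 T h ih => simp; omega

lemma tri_sub {L : List ℕ} {T : Finset (Finset ℕ)} (h : IsTriangulation L T) :
    ∀ t ∈ T, ∀ v ∈ t, v ∈ L := by
  induction h with
  | tri i j k =>
    intro t ht v hv
    simp only [Finset.mem_singleton] at ht
    subst ht
    simp only [Finset.mem_insert, Finset.mem_singleton] at hv
    rcases hv with rfl | rfl | rfl <;> simp
  | ear l1 x y z l2 T h ih =>
    intro t ht v hv
    rcases Finset.mem_insert.mp ht with rfl | ht
    · simp only [Finset.mem_insert, Finset.mem_singleton] at hv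
      rcases hv with rfl | rfl | rfl <;> simp
    · have := ih t ht v hv
      simp only [List.mem_append, List.mem_cons] at this ⊢
      tauto

lemma tz {L : List ℕ} {T : Finset (Finset ℕ)} (h : IsTriangulation L T) (hnd : L.Nodup) :
    Zl (L.tail.map (fun v => (cnt T v : ℤ))) := by
  induction h with
  | tri i j k =>
    simp only [List.nodup_cons, List.mem_cons, List.mem_singleton, List.nodup_nil] at hnd
    have hij : i ≠ j := by tauto
    have hik : i ≠ k := by tauto
    have hjk : j ≠ k := by tauto
    have hcj : cnt {({i,j,k} : Finset ℕ)} j = 1 := by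
      unfold cnt
      rw [Finset.filter_singleton, if_pos (by simp)]
      simp
    have hck : cnt {({i,j,k} : Finset ℕ)} k = 1 := by
      unfold cnt
      rw [Finset.filter_singleton, if_pos (by simp)]
      simp
    simp only [List.tail_cons, List.map_cons, List.map_nil, hcj, hck]
    rw [Zl, ZAux_cons _ _ _ (by simp), ZAux_single]
    norm_num [stepv]
  | ear l1 x y z l2 T h ih =>
    -- notation
    have hndL' : (l1 ++ x :: z :: l2).Nodup := by
      refine List.Nodup.sublist ?_ hnd
      refine List.Sublist.append_left ?_ l1
      exact List.Sublist.cons₂ x (List.sublist_cons_self y (z :: l2))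
    have hy_not : y ∉ l1 ++ x :: z :: l2 := by
      intro hy
      simp only [List.mem_append, List.mem_cons] at hy
      have : ¬ (l1 ++ x :: y :: z :: l2).Nodup := by
        simp only [List.nodup_append, List.nodup_cons, List.mem_cons] at hnd ⊢
        intro h'
        rcases hy with hy | rfl | rfl | hy
        · exact hnd.2.2 y hy y (by simp) rfl
        · exact hnd.2.1.1 (by simp)
        · exact hnd.2.1.2.1 (by simp)
        · exact hnd.2.1.2.1 (by simp [hy])
      exact this hnd
    have hy_tri : ∀ t ∈ T, y ∉ t := by
      intro t ht hyt
      exact hy_not (tri_sub h t ht y hyt)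
    have hxyzT : ({x, y, z} : Finset ℕ) ∉ T := by
      intro hmem
      exact hy_tri _ hmem (by simp)
    have hcy : cnt (insert {x,y,z} T) y = 1 := by
      rw [cnt_insert_mem T _ hxyzT y (by simp), cnt_zero T y hy_tri]
    have hcx : cnt (insert {x,y,z} T) x = cnt T x + 1 :=
      cnt_insert_mem T _ hxyzT x (by simp)
    have hcz : cnt (insert {x,y,z} T) z = cnt T z + 1 :=
      cnt_insert_mem T _ hxyzT z (by simp)
    have hother : ∀ v, v ≠ x → v ≠ y → v ≠ z → cnt (insert {x,y,z} T) v = cnt T v := by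
      intro v h1 h2 h3
      exact cnt_insert_not_mem T _ v (by simp [h1, h2, h3])
    have ihz := ih hndL'
    -- nodup facts about membership
    have hnd' := hnd
    simp only [List.nodup_append, List.nodup_cons, List.mem_cons] at hnd'
    cases l1 with
    | nil =>
      simp only [List.nil_append, List.tail_cons, List.map_cons] at ihz ⊢
      rw [hcy, hcz]
      have hmap : l2.map (fun v => (cnt (insert {x,y,z} T) v : ℤ)) =
          l2.map (fun v => (cnt T v : ℤ)) := by
        apply List.map_congr_left
        intro v hv
        simp only [List.nil_append, List.nodup_cons, List.mem_cons] at hnd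
        rw [hother v ?_ ?_ ?_]
        · rintro rfl; exact hnd.1 (by simp [hv])
        · rintro rfl; exact hnd.2.1 (by simp [hv])
        · rintro rfl; exact hnd.2.2.1 (by simp [hv])
      rw [hmap]
      push_cast
      rw [zl_front_iff (cnt T z : ℤ) (l2.map (fun v => (cnt T v : ℤ)))]
      exact ihz
    | cons w l1' =>
      simp only [List.cons_append, List.tail_cons, List.map_append, List.map_cons] at ihz ⊢
      -- membership distinctness for l1' and l2 elements
      have hne_l1' : ∀ v ∈ l1', v ≠ x ∧ v ≠ y ∧ v ≠ z := by
        intro v hv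
        have hndl1 : (w :: l1' ++ x :: y :: z :: l2).Nodup := hnd
        simp only [List.nodup_append, List.nodup_cons, List.mem_cons] at hndl1
        refine ⟨?_, ?_, ?_⟩ <;> rintro rfl <;>
          exact hndl1.2.2 v (Or.inr hv) v (by simp) rfl
      have hne_l2 : ∀ v ∈ l2, v ≠ x ∧ v ≠ y ∧ v ≠ z := by
        intro v hv
        have hndl1 : (w :: l1' ++ x :: y :: z :: l2).Nodup := hnd
        simp only [List.nodup_append, List.nodup_cons, List.mem_cons] at hndl1
        refine ⟨?_, ?_, ?_⟩ <;> rintro rfl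
        · exact hndl1.2.1.1 (by simp [hv])
        · exact hndl1.2.1.2.1 (by simp [hv])
        · exact hndl1.2.1.2.2.1 (by simp [hv])
      have hmap1 : l1'.map (fun v => (cnt (insert {x,y,z} T) v : ℤ)) =
          l1'.map (fun v => (cnt T v : ℤ)) := by
        apply List.map_congr_left
        intro v hv
        obtain ⟨h1, h2, h3⟩ := hne_l1' v hv
        rw [hother v h1 h2 h3]
      have hmap2 : l2.map (fun v => (cnt (insert {x,y,z} T) v : ℤ)) =
          l2.map (fun v => (cnt T v : ℤ)) := by
        apply List.map_congr_left
        intro v hv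
        obtain ⟨h1, h2, h3⟩ := hne_l2 v hv
        rw [hother v h1 h2 h3]
      rw [hmap1, hmap2, hcx, hcy, hcz]
      push_cast
      rw [Zl]
      exact (zaux_mid_iff (cnt T x : ℤ) (cnt T z : ℤ)
        (l2.map (fun v => (cnt T v : ℤ)))
        (l1'.map (fun v => (cnt T v : ℤ))) (1, 0) (by norm_num)).mpr ihz

end ZCF
namespace ZCF

lemma tri_map (f : ℕ → ℕ) {L : List ℕ} {T : Finset (Finset ℕ)} (h : IsTriangulation L T) :
    IsTriangulation (L.map f) (T.image (Finset.image f)) := by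
  induction h with
  | tri i j k =>
    have h1 : Finset.image f {i, j, k} = {f i, f j, f k} := by
      simp [Finset.image_insert]
    have h2 : (({({i,j,k} : Finset ℕ)} : Finset (Finset ℕ)).image (Finset.image f)) =
        {({f i, f j, f k} : Finset ℕ)} := by
      rw [Finset.image_singleton, h1]
    rw [show (List.map f [i,j,k]) = [f i, f j, f k] by simp, h2]
    exact .tri _ _ _
  | ear l1 x y z l2 T h ih =>
    have hm : (l1 ++ x :: y :: z :: l2).map f = l1.map f ++ f x :: f y :: f z :: l2.map f := by
      simp
    have hm2 : (l1 ++ x :: z :: l2).map f = l1.map f ++ f x :: f z :: l2.map f := by simp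
    rw [hm]
    have himg : (insert ({x,y,z} : Finset ℕ) T).image (Finset.image f) =
        insert ({f x, f y, f z} : Finset ℕ) (T.image (Finset.image f)) := by
      rw [Finset.image_insert]
      congr 1
      simp [Finset.image_insert]
    rw [himg]
    refine IsTriangulation.ear _ _ _ _ _ _ ?_
    rw [← hm2]
    exact ih

lemma cnt_image (f : ℕ → ℕ) (hf : Function.Injective f) (T : Finset (Finset ℕ)) (v : ℕ) :
    cnt (T.image (Finset.image f)) (f v) = cnt T v := by
  unfold cnt
  have hfilter : (T.image (Finset.image f)).filter (fun t => f v ∈ t) =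
      (T.filter (fun t => v ∈ t)).image (Finset.image f) := by
    ext u
    simp only [Finset.mem_filter, Finset.mem_image]
    constructor
    · rintro ⟨⟨t0, ht0, rfl⟩, hmem⟩
      obtain ⟨w, hw, he⟩ := Finset.mem_image.mp hmem
      rw [← hf he]
      exact ⟨t0, ⟨ht0, hw⟩, rfl⟩
    · rintro ⟨t0, ⟨ht0, hv0⟩, rfl⟩
      exact ⟨⟨t0, ht0, rfl⟩, Finset.mem_image_of_mem f hv0⟩
  rw [hfilter, Finset.card_image_of_injective _ (Finset.image_injective hf)]

lemma not_mem_image_range (f : ℕ → ℕ) (T : Finset (Finset ℕ)) (u : ℕ) (hu : ∀ w, f w ≠ u) :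
    ∀ t ∈ T.image (Finset.image f), u ∉ t := by
  intro t ht hut
  obtain ⟨t0, _, rfl⟩ := Finset.mem_image.mp ht
  obtain ⟨w, _, hw⟩ := Finset.mem_image.mp hut
  exact hu w hw

lemma range_split (r j : ℕ) (hj1 : 1 ≤ j) (hjr : j + 1 ≤ r) :
    List.range (r+1) =
      List.range (j-1) ++ (j-1) :: j :: (j+1) ::
        (List.range (r - j - 1)).map (fun k => k + (j+2)) := by
  have h1 : r + 1 = (j-1) + (3 + (r-j-1)) := by omega
  rw [h1, List.range_add, List.range_add]
  rw [show List.range 3 = [0,1,2] by decide]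
  simp only [List.map_append, List.map_map, List.map_cons, List.map_nil, List.append_assoc,
    List.cons_append, List.nil_append]
  rw [List.append_right_inj]
  simp only [List.cons.injEq]
  refine ⟨by omega, by omega, by omega, ?_⟩
  apply List.map_congr_left
  intro k _
  simp only [Function.comp_apply]
  omega

lemma range_map_split (r j : ℕ) (hj1 : 1 ≤ j) (hjr : j + 1 ≤ r) :
    (List.range r).map (fun k => if k < j then k else k + 1) =
      List.range (j-1) ++ (j-1) :: (j+1) ::
        (List.range (r - j - 1)).map (fun k => k + (j+2)) := by
  have h1 : r = (j-1) + (2 + (r-j-1)) := by omega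
  conv_lhs => rw [h1, List.range_add, List.range_add]
  rw [show List.range 2 = [0,1] by decide]
  simp only [List.map_append, List.map_map, List.map_cons, List.map_nil, List.append_assoc,
    List.cons_append, List.nil_append]
  have hfirst : ∀ k ∈ List.range (j-1), (if k < j then k else k + 1) = k := by
    intro k hk
    rw [List.mem_range] at hk
    rw [if_pos (by omega)]
  rw [List.map_congr_left hfirst, List.map_id']
  rw [List.append_right_inj]
  simp only [List.cons.injEq]
  refine ⟨by rw [if_pos (by omega)]; omega, by rw [if_neg (by omega)]; omega, ?_⟩
  apply List.map_congr_left
  intro k _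
  simp only [Function.comp_apply]
  rw [if_neg (by omega)]
  omega

lemma build (r j : ℕ) (hj1 : 1 ≤ j) (hjr : j + 1 ≤ r) (T' : Finset (Finset ℕ))
    (hT' : IsTriangulation (List.range r) T') :
    ∃ T : Finset (Finset ℕ), IsTriangulation (List.range (r+1)) T ∧
      cnt T j = 1 ∧
      (∀ v < j, cnt T v = cnt T' v + (if v = j - 1 then 1 else 0)) ∧
      (∀ v, j < v → cnt T v = cnt T' (v-1) + (if v = j + 1 then 1 else 0)) := by
  set f : ℕ → ℕ := fun k => if k < j then k else k + 1 with hf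
  have hinj : Function.Injective f := by
    intro a b
    simp only [hf]
    split_ifs <;> omega
  have hmiss : ∀ w, f w ≠ j := by
    intro w
    simp only [hf]
    split_ifs <;> omega
  have hyt : ∀ t ∈ T'.image (Finset.image f), j ∉ t := not_mem_image_range f T' j hmiss
  have hnotmem : ({j-1, j, j+1} : Finset ℕ) ∉ T'.image (Finset.image f) := by
    intro hmem
    exact hyt _ hmem (by simp)
  refine ⟨insert {j-1, j, j+1} (T'.image (Finset.image f)), ?_, ?_, ?_, ?_⟩
  · have hmap := tri_map f hT'
    rw [range_map_split r j hj1 hjr] at hmap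
    have := IsTriangulation.ear (List.range (j-1)) (j-1) j (j+1)
      ((List.range (r-j-1)).map (fun k => k + (j+2))) _ hmap
    rw [← range_split r j hj1 hjr] at this
    exact this
  · rw [cnt_insert_mem _ _ hnotmem j (by simp), cnt_zero _ _ hyt]
  · intro v hv
    have hfv : f v = v := by simp only [hf]; rw [if_pos hv]
    have hci : cnt (T'.image (Finset.image f)) v = cnt T' v := by
      conv_lhs => rw [← hfv]
      exact cnt_image f hinj T' v
    by_cases hveq : v = j - 1
    · rw [if_pos hveq, cnt_insert_mem _ _ hnotmem v (by simp [hveq]), hci]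
    · rw [if_neg hveq, cnt_insert_not_mem _ _ v (by
        simp only [Finset.mem_insert, Finset.mem_singleton]
        push_neg
        omega), hci]
      omega
  · intro v hv
    have hfv : f (v - 1) = v := by
      simp only [hf]
      rw [if_neg (by omega)]
      omega
    have hci : cnt (T'.image (Finset.image f)) v = cnt T' (v - 1) := by
      conv_lhs => rw [← hfv]
      exact cnt_image f hinj T' (v - 1)
    by_cases hveq : v = j + 1
    · rw [if_pos hveq, cnt_insert_mem _ _ hnotmem v (by simp [hveq]), hci]
    · rw [if_neg hveq, cnt_insert_not_mem _ _ v (by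
        simp only [Finset.mem_insert, Finset.mem_singleton]
        push_neg
        omega), hci]
      omega

end ZCF
namespace ZCF

set_option maxHeartbeats 1000000 in
lemma exT : ∀ (n : ℕ) (l : List ℤ), l.length ≤ n → (∀ a ∈ l, 0 < a) → Zl l →
    ∃ T : Finset (Finset ℕ), IsTriangulation (List.range (l.length + 1)) T ∧
      ∀ i : ℕ, (h : i < l.length) → (cnt T (i+1) : ℤ) = l.get ⟨i, h⟩ := by
  intro n
  induction n with
  | zero =>
    intro l hlen _ hZ
    have hnil : l = [] := List.eq_nil_of_length_eq_zero (by omega)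
    subst hnil
    exact absurd hZ (ZAux_nil _)
  | succ n ih =>
    intro l hlen hpos hZ
    match l, hlen, hpos, hZ with
    | [], _, _, hZ => exact absurd hZ (ZAux_nil _)
    | [a], _, hpos, hZ =>
      exfalso
      rw [Zl, ZAux_single] at hZ
      have := hpos a (by simp)
      simp at hZ
      omega
    | [a, b], _, hpos, hZ =>
      rw [Zl, ZAux_cons _ _ _ (by simp), ZAux_single] at hZ
      obtain ⟨h1, h2⟩ := hZ
      simp only [stepv] at h1 h2
      have ha : 0 < a := hpos a (by simp)
      have hb : 0 < b := hpos b (by simp)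
      have ha1 : a = 1 := by nlinarith
      subst ha1
      have hb1 : b = 1 := by nlinarith
      subst hb1
      refine ⟨{({0,1,2} : Finset ℕ)}, ?_, ?_⟩
      · rw [show ([(1:ℤ),1].length + 1) = 3 from rfl, show List.range 3 = [0,1,2] by decide]
        exact .tri 0 1 2
      · intro i h
        have h2' : i < 2 := h
        interval_cases i <;> simp [cnt, Finset.filter_singleton, List.get]
    | (c :: d :: e :: l0), hlen, hpos, hZ =>
      set l := c :: d :: e :: l0 with hldef
      have hlen3 : 3 ≤ l.length := by simp [hldef]
      have hlenn : l.length ≤ n + 1 := hlen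
      rcases blowdown l hpos hlen3 hZ with ⟨b, t, hb1, hEq, hZ'⟩ | ⟨s, a, b, t, ha1, hb1, hEq, hZ'⟩
      · -- front blow-down : l = 1 :: (b+1) :: t
        have hll : l.length = t.length + 2 := by rw [hEq]; simp
        have hpos' : ∀ x ∈ b :: t, 0 < x := by
          intro x hx
          rcases List.mem_cons.mp hx with rfl | hx
          · omega
          · exact hpos x (by rw [hEq]; simp [hx])
        obtain ⟨T', hT', hc'⟩ := ih (b :: t) (by simp; omega) hpos' hZ'
        have hT'' : IsTriangulation (List.range l.length) T' := by
          have he : (b :: t).length + 1 = l.length := by simp; omega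
          rwa [he] at hT'
        obtain ⟨T, hTri, hcj, hlt, hgt⟩ := build l.length 1 le_rfl (by omega) T' hT''
        refine ⟨T, hTri, ?_⟩
        intro i h
        rcases (by omega : i = 0 ∨ i = 1 ∨ 2 ≤ i) with rfl | rfl | hi2
        · simp only [List.get_eq_getElem, hEq]
          simp only [List.getElem_cons_zero]
          rw [show (0:ℕ) + 1 = 1 from rfl, hcj]
          simp
        · have hg := hgt 2 (by omega)
          rw [if_pos rfl] at hg
          rw [show (2:ℕ) - 1 = 1 from rfl] at hg
          have hcm := hc' 0 (by simp)
          simp only [List.get_eq_getElem, List.getElem_cons_zero] at hcm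
          simp only [List.get_eq_getElem, hEq]
          simp only [List.getElem_cons_succ, List.getElem_cons_zero]
          rw [show (1:ℕ) + 1 = 2 from rfl, hg]
          push_cast
          rw [show (0:ℕ) + 1 = 1 from rfl] at hcm
          omega
        · obtain ⟨m, rfl⟩ : ∃ m, i = m + 2 := ⟨i - 2, by omega⟩
          have hg := hgt (m + 3) (by omega)
          rw [if_neg (by omega)] at hg
          rw [show m + 3 - 1 = m + 2 from rfl] at hg
          have hcm := hc' (m + 1) (by simp; omega)
          simp only [List.get_eq_getElem, List.getElem_cons_succ] at hcm
          simp only [List.get_eq_getElem, hEq]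
          simp only [List.getElem_cons_succ]
          rw [show m + 2 + 1 = m + 3 from rfl, hg]
          push_cast
          rw [add_zero]
          exact hcm
      · -- interior blow-down : l = s ++ (a+1) :: 1 :: (b+1) :: t
        have hll : l.length = s.length + 3 + t.length := by rw [hEq]; simp; omega
        have hl'l : (s ++ a :: b :: t).length = s.length + 2 + t.length := by simp; omega
        have hpos' : ∀ x ∈ s ++ a :: b :: t, 0 < x := by
          intro x hx
          simp only [List.mem_append, List.mem_cons] at hx
          rcases hx with hx | rfl | rfl | hx
          · exact hpos x (by rw [hEq]; simp [hx])
          · omega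
          · omega
          · exact hpos x (by rw [hEq]; simp [hx])
        obtain ⟨T', hT', hc'⟩ := ih (s ++ a :: b :: t) (by omega) hpos' hZ'
        have hT'' : IsTriangulation (List.range l.length) T' := by
          have he : (s ++ a :: b :: t).length + 1 = l.length := by omega
          rwa [he] at hT'
        obtain ⟨T, hTri, hcj, hlt, hgt⟩ :=
          build l.length (s.length + 2) (by omega) (by omega) T' hT''
        refine ⟨T, hTri, ?_⟩
        intro i h
        rcases (by omega : i < s.length ∨ i = s.length ∨ i = s.length + 1 ∨ i = s.length + 2 ∨
            s.length + 3 ≤ i) with hik | rfl | rfl | rfl | hi3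
        · -- i < s.length : unchanged vertices
          have hg := hlt (i + 1) (by omega)
          rw [if_neg (by omega)] at hg
          have hcm := hc' i (by omega)
          simp only [List.get_eq_getElem] at hcm
          rw [List.getElem_append_left hik] at hcm
          simp only [List.get_eq_getElem, hEq]
          rw [List.getElem_append_left hik, hg]
          push_cast
          rw [add_zero]
          exact hcm
        · -- i = s.length : vertex j - 1
          have hg := hlt (s.length + 1) (by omega)
          rw [if_pos (by omega)] at hg
          have hcm := hc' s.length (by omega)
          simp only [List.get_eq_getElem] at hcm
          rw [List.getElem_append_right (le_refl s.length)] at hcm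
          simp only [Nat.sub_self, List.getElem_cons_zero] at hcm
          simp only [List.get_eq_getElem, hEq]
          rw [List.getElem_append_right (le_refl s.length)]
          simp only [Nat.sub_self, List.getElem_cons_zero]
          omega
        · -- i = s.length + 1 : the new vertex j
          simp only [List.get_eq_getElem, hEq]
          rw [List.getElem_append_right (by omega)]
          simp only [show s.length + 1 - s.length = 1 from by omega, List.getElem_cons_succ,
            List.getElem_cons_zero]
          rw [show s.length + 1 + 1 = s.length + 2 from rfl, hcj]
          simp
        · -- i = s.length + 2 : vertex j + 1
          have hg := hgt (s.length + 3) (by omega)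
          rw [if_pos (by omega)] at hg
          rw [show s.length + 3 - 1 = s.length + 2 from rfl] at hg
          have hcm := hc' (s.length + 1) (by omega)
          simp only [List.get_eq_getElem] at hcm
          rw [List.getElem_append_right (by omega)] at hcm
          simp only [show s.length + 1 - s.length = 1 from by omega, List.getElem_cons_succ,
            List.getElem_cons_zero] at hcm
          simp only [List.get_eq_getElem, hEq]
          rw [List.getElem_append_right (by omega)]
          simp only [show s.length + 2 - s.length = 2 from by omega,
            show (2:ℕ) = 1 + 1 from rfl, List.getElem_cons_succ, List.getElem_cons_zero]
          rw [show s.length + 2 + 1 = s.length + 3 from rfl, hg]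
          rw [show s.length + 1 + 1 = s.length + 2 from rfl] at hcm
          omega
        · -- i = s.length + 3 + m : shifted vertices
          obtain ⟨m, rfl⟩ : ∃ m, i = s.length + 3 + m := ⟨i - (s.length + 3), by omega⟩
          have hg := hgt (s.length + 3 + m + 1) (by omega)
          rw [if_neg (by omega)] at hg
          rw [show s.length + 3 + m + 1 - 1 = s.length + 3 + m from rfl] at hg
          have hcm := hc' (s.length + 2 + m) (by omega)
          simp only [List.get_eq_getElem] at hcm
          rw [List.getElem_append_right (by omega)] at hcm
          simp only [show s.length + 2 + m - s.length = m + 1 + 1 from by omega,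
            List.getElem_cons_succ] at hcm
          simp only [List.get_eq_getElem, hEq]
          rw [List.getElem_append_right (by omega)]
          simp only [show s.length + 3 + m - s.length = m + 1 + 1 + 1 from by omega,
            List.getElem_cons_succ]
          have h1 : (cnt T (s.length + 3 + m + 1) : ℤ) = (cnt T' (s.length + 2 + m + 1) : ℤ) := by
            rw [hg, show s.length + 2 + m + 1 = s.length + 3 + m from by omega]
            push_cast
            ring
          exact h1.trans hcm

end ZCF

/-- A sequence `a_1,...,a_r` of positive integers is a zero continued fraction
iff there is a triangulation of a convex polygon `P_0 P_1 ⋯ P_r` such that the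
number of triangles having `P_i` as a vertex equals `a_i` for `1 ≤ i ≤ r`. -/
theorem stmt8 (l : List ℤ) (hne : l ≠ []) (hpos : ∀ a ∈ l, 0 < a) :
    (admissible l ∧ hj l = 0) ↔
      ∃ T : Finset (Finset ℕ), IsTriangulation (List.range (l.length + 1)) T ∧
        ∀ i : ℕ, (h : i < l.length) →
          ((T.filter (fun t => i + 1 ∈ t)).card : ℤ) = l.get ⟨i, h⟩ := by
  constructor
  · rintro ⟨hadm, hhj⟩
    have hZ : ZCF.Zl l := ZCF.step2 l hne hadm hhj
    obtain ⟨T, hT, hc⟩ := ZCF.exT l.length l le_rfl hpos hZ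
    exact ⟨T, hT, hc⟩
  · rintro ⟨T, hT, hc⟩
    have hnd : (List.range (l.length + 1)).Nodup := List.nodup_range
    have hz := ZCF.tz hT hnd
    have hmap : ((List.range (l.length + 1)).tail).map (fun v => (ZCF.cnt T v : ℤ)) = l := by
      apply List.ext_getElem
      · simp
      · intro i h1 h2
        simp only [List.getElem_map, List.getElem_tail, List.getElem_range]
        have := hc i h2
        rw [List.get_eq_getElem] at this
        exact this
    rw [hmap] at hz
    exact ⟨((ZCF.Zl_iff l hne).mp hz).1, ZCF.step3 l hpos hz⟩
end

section
/- Let [b_1,...,b_t] be a Wahl continued fraction with t ≥ 2, b_t = 2, and b_2 = b_3 = ... = b_t = 2 (so the chain is [b_1, 2,...,2]). Then b_1 = t + 3, and the discrepancies satisfy m_1 = -1 + 1/(b_1-2) and m_t = -1/(b_1-2), where the discrepancy m_i = -1 + δ_i/(δ_1+δ_t) and the δ_i are defined inductively via the Wahl construction (δ_1 = 1 for [4]; under [a_1,...,a_r] ↦ [a_1+1,...,a_r,2] the new sequence is δ_1,...,δ_r, δ_1+δ_r, and under [a_1,...,a_r] ↦ [2,a_1,...,a_r+1] it is δ_1+δ_r,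 δ_1,...,δ_r). -/
/-- `WahlD l d` : `l` is a Wahl continued fraction and `d` is its associated
sequence `δ_1,...,δ_r`.  For `[4]` the sequence is `(1)`; under
`[a_1,...,a_r] ↦ [2, a_1,...,a_r+1]` the sequence becomes
`(δ_1+δ_r, δ_1,...,δ_r)`, and under `[a_1,...,a_r] ↦ [a_1+1,...,a_r, 2]` it
becomes `(δ_1,...,δ_r, δ_1+δ_r)`. -/
inductive WahlD : List ℤ → List ℤ → Prop
  | base : WahlD [4] [1]
  | left (l : List ℤ) (a : ℤ) (d : List ℤ) (e : ℤ) :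
      WahlD (l ++ [a]) (d ++ [e]) →
      WahlD (2 :: (l ++ [a + 1])) (((d ++ [e]).headD 0 + e) :: (d ++ [e]))
  | right (a : ℤ) (l : List ℤ) (e : ℤ) (d : List ℤ) :
      WahlD (a :: l) (e :: d) →
      WahlD ((a + 1) :: (l ++ [2])) ((e :: d) ++ [e + (e :: d).getLastD 0])

lemma wahl_mem {L d : List ℤ} (h : WahlD L d) : ∀ x ∈ L, 2 ≤ x := by
  induction h with
  | base => intro x hx; simp at hx; omega
  | left l a d e h ih =>
    intro x hx
    simp only [List.mem_cons, List.mem_append, List.mem_singleton,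
      List.not_mem_nil, or_false] at hx
    rcases hx with rfl | hx | rfl
    · omega
    · exact ih x (by simp [hx])
    · have := ih a (by simp); omega
  | right a l e d h ih =>
    intro x hx
    simp only [List.mem_cons, List.mem_append, List.mem_singleton,
      List.not_mem_nil, or_false] at hx
    rcases hx with rfl | hx | rfl
    · have := ih a (by simp); omega
    · exact ih x (by simp [hx])
    · omega

lemma wahl_single' {L d : List ℤ} (h : WahlD L d) (hL : L.length = 1) :
    L = [4] ∧ d = [1] := by
  cases h with
  | base => exact ⟨rfl, rfl⟩
  | left l a d e h => exfalso; simp at hL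
  | right a l e d h => exfalso; simp at hL

lemma wahl_single {a : ℤ} {d : List ℤ} (h : WahlD [a] d) : a = 4 ∧ d = [1] := by
  obtain ⟨h1, h2⟩ := wahl_single' h rfl
  exact ⟨by simpa using congrArg (List.headD · 0) h1, h2⟩

lemma key : ∀ {L d : List ℤ}, WahlD L d → ∀ (b1 : ℤ) (t : ℕ), 2 ≤ t →
    L = b1 :: List.replicate (t - 1) 2 →
    b1 = (t : ℤ) + 3 ∧ d.headD 0 = 1 ∧ d.getLastD 0 = (t : ℤ) := by
  intro L d h
  induction h with
  | base =>
    intro b1 t ht hL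
    exfalso
    have := congrArg List.length hL
    simp at this
    omega
  | left l a d e h ih =>
    intro b1 t ht hL
    exfalso
    rw [List.cons_eq_cons] at hL
    have hmem : a + 1 ∈ List.replicate (t - 1) 2 := hL.2 ▸ (by simp)
    have : a + 1 = 2 := (List.eq_of_mem_replicate hmem)
    have := wahl_mem h a (by simp)
    omega
  | right a l e d' h ih =>
    intro b1 t ht hL
    rw [List.cons_eq_cons] at hL
    obtain ⟨hb, hl⟩ := hL
    have hrep : List.replicate (t - 1) 2 = List.replicate (t - 2) 2 ++ [(2:ℤ)] := by
      have : t - 1 = (t - 2) + 1 := by omega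
      rw [this, List.replicate_succ']
    rw [hrep] at hl
    have hl' : l = List.replicate (t - 2) 2 := (List.append_inj_left' hl rfl)
    rcases Nat.eq_or_lt_of_le ht with h2 | h3
    · -- t = 2
      subst hl'
      have : t - 2 = 0 := by omega
      rw [this] at h
      simp at h
      obtain ⟨ha, hd⟩ := wahl_single h
      rw [List.cons_eq_cons] at hd
      obtain ⟨rfl, rfl⟩ := hd
      refine ⟨by omega, by simp, by simp; omega⟩
    · -- t ≥ 3
      have ht' : 2 ≤ t - 1 := by omega
      have := ih a (t - 1) ht' (by rw [hl', show t - 2 = t - 1 - 1 from by omega])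
      obtain ⟨ha, hh, hlast⟩ := this
      simp only [List.headD_cons] at hh
      subst hh
      constructor
      · rw [← hb, ha]; push_cast; omega
      constructor
      · simp
      · simp only [List.getLastD_concat, hlast]
        push_cast
        omega


/-- For the Wahl chain `[b_1, 2,...,2]` of length `t ≥ 2` (so `b_t = 2` and
`b_2 = ⋯ = b_t = 2`) one has `b_1 = t + 3`, and the discrepancies
`m_i = -1 + δ_i/(δ_1+δ_t)` at the two ends satisfy `m_1 = -1 + 1/(b_1-2)` and
`m_t = -1/(b_1-2)`. -/
theorem stmt15 (b1 : ℤ) (t : ℕ) (d : List ℤ) (ht : 2 ≤ t)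
    (h : WahlD (b1 :: List.replicate (t - 1) 2) d) :
    b1 = (t : ℤ) + 3 ∧
    -1 + (d.headD 0 : ℚ) / ((d.headD 0 : ℚ) + (d.getLastD 0 : ℚ)) =
      -1 + 1 / ((b1 : ℚ) - 2) ∧
    -1 + (d.getLastD 0 : ℚ) / ((d.headD 0 : ℚ) + (d.getLastD 0 : ℚ)) =
      -(1 / ((b1 : ℚ) - 2)) := by
  obtain ⟨hb, hh, hl⟩ := key h b1 t ht rfl
  have hb' : (b1 : ℚ) = (t : ℚ) + 3 := by exact_mod_cast congrArg (Int.cast : ℤ → ℚ) hb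
  have htne : (t : ℚ) + 1 ≠ 0 := by positivity
  rw [hh, hl, hb']
  push_cast
  have htne' : (1 : ℚ) + (t : ℚ) ≠ 0 := by positivity
  refine ⟨hb, ?_, ?_⟩
  · rw [show (t:ℚ) + 3 - 2 = 1 + (t:ℚ) from by ring]
  · rw [show (t:ℚ) + 3 - 2 = 1 + (t:ℚ) from by ring]
    field_simp
    ring
end

section
/- Let [b_1,...,b_t] be a Wahl continued fraction with t ≥ 2 and b_t = 2, such that not all of b_2,...,b_t equal 2. Write m_1 = -1 + δ_1/(δ_1+δ_t) and m_t = -1 + δ_t/(δ_1+δ_t) for its discrepancies. Then m_1 = -1 + μ and m_t = -μ for some rational μ with 1/b_1 < μ < 1/(b_1-1). -/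
lemma wahl_inv (l d : List ℤ) (h : WahlD l d) :
    2 ≤ l.headD 0 ∧ 2 ≤ l.getLastD 0 ∧ 1 ≤ d.headD 0 ∧ 1 ≤ d.getLastD 0 ∧
    d.getLastD 0 < (l.headD 0 - 1) * d.headD 0 ∧
    ((∀ x ∈ l.tail, x = 2) ∧ d.getLastD 0 = (l.headD 0 - 2) * d.headD 0 - 1 ∨
      (l.headD 0 - 2) * d.headD 0 < d.getLastD 0) := by
  induction h with
  | base => norm_num
  | left L A D E _ ih =>
      obtain ⟨ha, hb, he, hf, hlt, _⟩ := ih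
      have hle : (D ++ [E]).getLastD 0 = E := List.getLastD_concat
      rw [hle] at hf hlt
      have hg : (((D ++ [E]).headD 0 + E) :: (D ++ [E])).getLastD 0 = E := by
        rw [show ((D ++ [E]).headD 0 + E) :: (D ++ [E])
            = (((D ++ [E]).headD 0 + E) :: D) ++ [E] by simp, List.getLastD_concat]
      have hg2 : (2 :: (L ++ [A + 1])).getLastD 0 = A + 1 := by
        rw [show (2:ℤ) :: (L ++ [A + 1]) = ((2:ℤ) :: L) ++ [A + 1] by simp,
          List.getLastD_concat]
      have hb2 : (L ++ [A]).getLastD 0 = A := List.getLastD_concat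
      rw [hb2] at hb
      refine ⟨by norm_num, ?_, ?_, ?_, ?_, Or.inr ?_⟩
      · rw [hg2]; omega
      · simp only [List.headD_cons]; omega
      · rw [hg]; omega
      · rw [hg]; simp only [List.headD_cons]; nlinarith
      · rw [hg]; simp only [List.headD_cons]; nlinarith
  | right A L E D _ ih =>
      obtain ⟨ha, hb, he, hf, hlt, hd⟩ := ih
      simp only [List.headD_cons] at ha he hlt hd
      have hle : ((E :: D) ++ [E + (E :: D).getLastD 0]).getLastD 0
          = E + (E :: D).getLastD 0 := List.getLastD_concat
      have hh : ((E :: D) ++ [E + (E :: D).getLastD 0]).headD 0 = E := by simp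
      have hlast2 : ((A + 1) :: (L ++ [2])).getLastD 0 = 2 := by
        rw [show (A + 1) :: (L ++ [2]) = ((A + 1) :: L) ++ [2] by simp,
          List.getLastD_concat]
      refine ⟨by simp only [List.headD_cons]; omega, by rw [hlast2], ?_, ?_, ?_, ?_⟩
      · rw [hh]; omega
      · rw [hle]; omega
      · rw [hle, hh]; simp only [List.headD_cons]; nlinarith
      · simp only [List.headD_cons]
        rcases hd with ⟨h2, heq⟩ | hgt
        · refine Or.inl ⟨?_, ?_⟩
          · intro x hx
            simp only [List.tail_cons, List.mem_append, List.mem_singleton] at hx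
            rcases hx with hx | hx
            · exact h2 x hx
            · exact hx
          · rw [hle, hh]; nlinarith
        · refine Or.inr ?_
          rw [hle, hh]; nlinarith

/-- Let `[b_1,...,b_t]` be a Wahl continued fraction with `t ≥ 2`, `b_t = 2`,
not all of `b_2,...,b_t` equal to `2`.  Then the discrepancies
`m_1 = -1 + δ_1/(δ_1+δ_t)` and `m_t = -1 + δ_t/(δ_1+δ_t)` satisfy
`m_1 = -1 + μ` and `m_t = -μ` for some rational `μ` with
`1/b_1 < μ < 1/(b_1-1)`. -/
theorem stmt16 (l d : List ℤ) (h : WahlD l d) (ht : 2 ≤ l.length)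
    (hlast : l.getLastD 0 = 2) (hnotM : ¬ ∀ x ∈ l.tail, x = 2) :
    ∃ μ : ℚ, 1 / (l.headD 0 : ℚ) < μ ∧ μ < 1 / ((l.headD 0 : ℚ) - 1) ∧
      -1 + (d.headD 0 : ℚ) / ((d.headD 0 : ℚ) + (d.getLastD 0 : ℚ)) = -1 + μ ∧
      -1 + (d.getLastD 0 : ℚ) / ((d.headD 0 : ℚ) + (d.getLastD 0 : ℚ)) = -μ := by
  obtain ⟨ha, -, he, hf, hlt, hd⟩ := wahl_inv l d h
  have hgt : (l.headD 0 - 2) * d.headD 0 < d.getLastD 0 := by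
    rcases hd with ⟨h2, -⟩ | hgt
    · exact absurd h2 hnotM
    · exact hgt
  set a := l.headD 0
  set e := d.headD 0
  set f := d.getLastD 0
  have ha' : (2:ℚ) ≤ (a:ℚ) := by exact_mod_cast ha
  have he' : (1:ℚ) ≤ (e:ℚ) := by exact_mod_cast he
  have hf' : (1:ℚ) ≤ (f:ℚ) := by exact_mod_cast hf
  have hlt' : (f:ℚ) < ((a:ℚ) - 1) * (e:ℚ) := by
    exact_mod_cast hlt
  have hgt' : ((a:ℚ) - 2) * (e:ℚ) < (f:ℚ) := by
    exact_mod_cast hgt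
  have hS : (0:ℚ) < (e:ℚ) + (f:ℚ) := by linarith
  refine ⟨(e:ℚ) / ((e:ℚ) + (f:ℚ)), ?_, ?_, rfl, ?_⟩
  · rw [div_lt_div_iff₀ (by linarith) hS]
    nlinarith
  · rw [div_lt_div_iff₀ hS (by linarith)]
    nlinarith
  · field_simp
    ring
end

section
/- For every k ≥ 3, the Hirzebruch–Jung continued fraction [2,...,2, 5, k] with k-2 twos at the start equals (2k-1)²/((2k-1)(2k-3)-1). In particular this is a Wahl continued fraction of the form m²/(ma-1) with m = 2k-1, a = 2k-3. -/
lemma wahl_aux : ∀ n : ℕ, IsWahl (List.replicate n 2 ++ [5, (n : ℤ) + 2])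
  | 0 => by
    have h := IsWahl.right 4 [] IsWahl.base
    norm_num at h ⊢
    exact h
  | (n + 1) => by
    have ih := wahl_aux n
    have h := IsWahl.left (List.replicate n 2 ++ [5]) ((n : ℤ) + 2) (by
      simpa [List.append_assoc] using ih)
    have : (2 : ℤ) :: ((List.replicate n 2 ++ [5]) ++ [(n : ℤ) + 2 + 1]) =
        List.replicate (n + 1) 2 ++ [5, ((n : ℕ) + 1 : ℤ) + 2] := by
      simp [List.replicate_succ, List.append_assoc]
      ring
    rw [this] at h
    simpa using h

lemma hj_aux (n : ℕ) (x : ℤ) (hx : 1 ≤ x) :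
    hj (List.replicate n 2 ++ [5, x]) =
      ((4 * n + 5) * (x : ℚ) - (n + 1)) / ((4 * n + 1) * (x : ℚ) - n) := by
  have hxq : (1 : ℚ) ≤ (x : ℚ) := by exact_mod_cast hx
  induction n with
  | zero =>
    have hx0 : (x : ℚ) ≠ 0 := by linarith
    simp only [List.replicate_zero, List.nil_append, hj]
    push_cast
    simp only [div_zero, sub_zero, zero_mul, zero_add, mul_one, mul_zero, one_mul]
    rw [eq_div_iff hx0, sub_mul, one_div, inv_mul_cancel₀ hx0]
  | succ n ih =>
    have h1 : (0 : ℚ) < (4 * n + 5) * (x : ℚ) - (n + 1) := by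
      have : (0 : ℚ) ≤ (n : ℚ) := Nat.cast_nonneg n
      nlinarith
    have h2 : (0 : ℚ) < (4 * n + 1) * (x : ℚ) - n := by
      have : (0 : ℚ) ≤ (n : ℚ) := Nat.cast_nonneg n
      nlinarith
    have hp : (4 * (n : ℚ) + 5) * (x : ℚ) - (n + 1) ≠ 0 := h1.ne'
    have hq : (4 * (n : ℚ) + 1) * (x : ℚ) - n ≠ 0 := h2.ne'
    have hQ : (4 * ((n : ℚ) + 1) + 1) * (x : ℚ) - ((n : ℚ) + 1) ≠ 0 := by nlinarith
    rw [List.replicate_succ, List.cons_append, hj, ih, one_div_div]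
    have e : (2 : ℚ) - ((4 * n + 1) * (x : ℚ) - n) / ((4 * n + 5) * (x : ℚ) - (n + 1)) =
        (2 * ((4 * n + 5) * (x : ℚ) - (n + 1)) - ((4 * n + 1) * (x : ℚ) - n)) /
          ((4 * n + 5) * (x : ℚ) - (n + 1)) := by
      rw [eq_div_iff hp, sub_mul, div_mul_cancel₀ _ hp]
    push_cast
    rw [e, div_eq_div_iff hp hQ]
    ring

/-- For every `k ≥ 3` the continued fraction `[2,...,2, 5, k]` (with `k-2` twos)
is a Wahl continued fraction and equals `(2k-1)²/((2k-1)(2k-3)-1)`, i.e. it is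
of the form `m²/(ma-1)` with `m = 2k-1`, `a = 2k-3`. -/
theorem stmt17 (k : ℕ) (hk : 3 ≤ k) :
    IsWahl (List.replicate (k - 2) (2 : ℤ) ++ [5, (k : ℤ)]) ∧
    hj (List.replicate (k - 2) (2 : ℤ) ++ [5, (k : ℤ)]) =
      (2 * (k : ℚ) - 1) ^ 2 / ((2 * (k : ℚ) - 1) * (2 * (k : ℚ) - 3) - 1) := by
  obtain ⟨n, rfl⟩ : ∃ n, k = n + 2 := ⟨k - 2, by omega⟩
  constructor
  · have h := wahl_aux n
    have : ((n : ℤ) + 2) = ((n + 2 : ℕ) : ℤ) := by push_cast; ring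
    rw [this] at h
    simpa using h
  · have h := hj_aux n ((n : ℤ) + 2) (by omega)
    have hx : ((n : ℤ) + 2) = ((n + 2 : ℕ) : ℤ) := by push_cast; ring
    rw [hx] at h
    simp only [Nat.add_sub_cancel] at *
    rw [h]
    push_cast [Nat.cast_add]
    rw [div_eq_div_iff (by nlinarith [Nat.cast_nonneg (α := ℚ) n]) (by nlinarith [Nat.cast_nonneg (α := ℚ) n])]
    ring
end
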